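/- Let k be a field and let P = k[t] be the polynomial ring. For a ∈ k, let k_a denote k regarded as a P-module via the evaluation homomorphism sending t to a. Let C be a bounded cochain complex of free finitely generated P-modules, and for each integer i let r_i denote the rank of the finitely generated P-module H^i(C) (the rank of its free part). Then for every integer i: (1) for every a ∈ k, dim_k H^i(C ⊗_P k_a) ≥ r_i, and (2) the set of a ∈ k for which dim_k H^i(C ⊗_P k_a) > r_i is finite. -/

import Mathlib

set_option maxHeartbeats 2000000
set_option synthInstance.maxHeartbeats 1000000


open Polynomial Matrix

/-- A bounded cochain complex of free finitely generated modules over the polynomial ring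
`P = k[τ]`, presented by a rank function and differential matrices (the degree `i`
differential `dᵢ : C^i → C^{i+1}` is given by the matrix `d i`). -/
structure FreePolyComplex (k : Type) [Field k] where
  rank : ℤ → ℕ
  d : ∀ i : ℤ, Matrix (Fin (rank (i + 1))) (Fin (rank i)) (Polynomial k)
  bounded : ∃ B : ℕ, ∀ i : ℤ, (B : ℤ) < |i| → rank i = 0
  dsq : ∀ i : ℤ, d (i + 1) * d i = 0

namespace FreePolyComplex

variable {k : Type} [Field k]

/-- The degree `i` differential of the complex `C ⊗_P k_a` of `k`-vector spaces obtained
by tensoring with `k_a` (i.e. evaluating all matrix entries at `τ = a`). -/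
noncomputable def dEval (C : FreePolyComplex k) (a : k) (i : ℤ) :
    (Fin (C.rank i) → k) →ₗ[k] (Fin (C.rank (i + 1)) → k) :=
  Matrix.mulVecLin ((C.d i).map (Polynomial.eval a))

/-- Transport along an equality of degrees. -/
def castHom (C : FreePolyComplex k) {i j : ℤ} (h : i = j) :
    (Fin (C.rank i) → k) →ₗ[k] (Fin (C.rank j) → k) := by subst h; exact LinearMap.id

/-- The cocycles `Z^q(C ⊗_P k_a)`. -/
noncomputable def cocyclesEval (C : FreePolyComplex k) (a : k) (q : ℤ) :
    Submodule k (Fin (C.rank q) → k) := LinearMap.ker (C.dEval a q)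

/-- The coboundaries `B^q(C ⊗_P k_a)`. -/
noncomputable def coboundariesEval (C : FreePolyComplex k) (a : k) (q : ℤ) :
    Submodule k (Fin (C.rank q) → k) :=
  (LinearMap.range (C.dEval a (q - 1))).map (C.castHom (by ring))

/-- The cohomology `H^q(C ⊗_P k_a)`. -/
noncomputable def cohomologyEval (C : FreePolyComplex k) (a : k) (q : ℤ) :=
  (C.cocyclesEval a q) ⧸ ((C.coboundariesEval a q).comap (C.cocyclesEval a q).subtype)

noncomputable instance (C : FreePolyComplex k) (a : k) (q : ℤ) :
    AddCommGroup (C.cohomologyEval a q) :=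
  inferInstanceAs (AddCommGroup
    ((C.cocyclesEval a q) ⧸ ((C.coboundariesEval a q).comap (C.cocyclesEval a q).subtype)))

noncomputable instance (C : FreePolyComplex k) (a : k) (q : ℤ) :
    Module k (C.cohomologyEval a q) :=
  inferInstanceAs (Module k
    ((C.cocyclesEval a q) ⧸ ((C.coboundariesEval a q).comap (C.cocyclesEval a q).subtype)))

/-- A cochain map between complexes of free `k[τ]`-modules, presented by matrices. -/
structure Hom (C D : FreePolyComplex k) where
  f : ∀ i : ℤ, Matrix (Fin (D.rank i)) (Fin (C.rank i)) (Polynomial k)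
  comm : ∀ i : ℤ, D.d i * f i = f (i + 1) * C.d i

namespace Hom

variable {C D : FreePolyComplex k}

/-- The degree `i` component of `f ⊗_P k_a`. -/
noncomputable def eval (φ : Hom C D) (a : k) (i : ℤ) :
    (Fin (C.rank i) → k) →ₗ[k] (Fin (D.rank i) → k) :=
  Matrix.mulVecLin ((φ.f i).map (Polynomial.eval a))

lemma comm_eval (φ : Hom C D) (a : k) (i : ℤ) :
    (D.dEval a i).comp (φ.eval a i) = (φ.eval a (i + 1)).comp (C.dEval a i) := by
  unfold FreePolyComplex.dEval Hom.eval
  rw [← Matrix.mulVecLin_mul, ← Matrix.mulVecLin_mul]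
  have h : (D.d i * φ.f i).map (⇑(Polynomial.evalRingHom a)) =
      (φ.f (i + 1) * C.d i).map (⇑(Polynomial.evalRingHom a)) := by rw [φ.comm i]
  rw [Matrix.map_mul, Matrix.map_mul] at h
  simpa [Polynomial.coe_evalRingHom] using congrArg Matrix.mulVecLin h

lemma eval_cast (φ : Hom C D) (a : k) {i j : ℤ} (h : i = j) :
    (φ.eval a j).comp (C.castHom h) = (D.castHom h).comp (φ.eval a i) := by
  subst h; rfl

lemma eval_mem_cocycles (φ : Hom C D) (a : k) (q : ℤ) :
    ∀ x ∈ C.cocyclesEval a q, φ.eval a q x ∈ D.cocyclesEval a q := by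
  intro x hx
  have := LinearMap.congr_fun (φ.comm_eval a q) x
  simp only [LinearMap.coe_comp, Function.comp_apply] at this
  simp only [FreePolyComplex.cocyclesEval, LinearMap.mem_ker] at hx ⊢
  rw [this, hx, map_zero]

/-- The map induced by `φ ⊗_P k_a` on cocycles. -/
noncomputable def cocyclesMap (φ : Hom C D) (a : k) (q : ℤ) :
    C.cocyclesEval a q →ₗ[k] D.cocyclesEval a q :=
  (φ.eval a q).restrict (φ.eval_mem_cocycles a q)

lemma eval_mem_coboundaries (φ : Hom C D) (a : k) (q : ℤ) :
    ∀ x ∈ C.coboundariesEval a q, φ.eval a q x ∈ D.coboundariesEval a q := by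
  intro x hx
  simp only [FreePolyComplex.coboundariesEval, Submodule.mem_map, LinearMap.mem_range] at hx ⊢
  obtain ⟨z, ⟨y, hy⟩, hz⟩ := hx
  refine ⟨φ.eval a (q - 1 + 1) z, ⟨φ.eval a (q - 1) y, ?_⟩, ?_⟩
  · rw [← hy]
    have := LinearMap.congr_fun (φ.comm_eval a (q - 1)) y
    simp only [LinearMap.coe_comp, Function.comp_apply] at this
    exact this
  · rw [← hz]
    have := LinearMap.congr_fun (φ.eval_cast a (by ring : q - 1 + 1 = q)) z
    simp only [LinearMap.coe_comp, Function.comp_apply] at this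
    exact this.symm

/-- The induced map `f^* : H^q(C ⊗_P k_a) → H^q(D ⊗_P k_a)` on cohomology. -/
noncomputable def cohomologyMap (φ : Hom C D) (a : k) (q : ℤ) :
    C.cohomologyEval a q →ₗ[k] D.cohomologyEval a q :=
  Submodule.mapQ _ _ (φ.cocyclesMap a q) (by
    intro x hx
    simp only [Submodule.mem_comap] at hx ⊢
    exact φ.eval_mem_coboundaries a q x hx)

end Hom

end FreePolyComplex

/-- `k_a`: the field `k` regarded as a module over `P = k[t]` via the evaluation
homomorphism sending `t` to `a`. -/
def Ka (k : Type) [Field k] (a : k) : Type := k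

instance (k : Type) [Field k] (a : k) : AddCommGroup (Ka k a) :=
  inferInstanceAs (AddCommGroup k)

noncomputable instance (k : Type) [Field k] (a : k) : Module (Polynomial k) (Ka k a) :=
  Module.compHom k (Polynomial.evalRingHom a)

namespace FreePolyComplex

variable {k : Type} [Field k]

/-- Transport along an equality of degrees, over `P = k[t]`. -/
noncomputable def castHomP (C : FreePolyComplex k) {i j : ℤ} (h : i = j) :
    (Fin (C.rank i) → Polynomial k) →ₗ[Polynomial k] (Fin (C.rank j) → Polynomial k) := by
  subst h; exact LinearMap.id

/-- The `P`-module `Z^q(C)` of degree `q` cocycles of `C`. -/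
noncomputable def cocyclesP (C : FreePolyComplex k) (q : ℤ) :
    Submodule (Polynomial k) (Fin (C.rank q) → Polynomial k) :=
  LinearMap.ker (Matrix.mulVecLin (C.d q))

/-- The `P`-module `B^q(C)` of degree `q` coboundaries of `C`. -/
noncomputable def coboundariesP (C : FreePolyComplex k) (q : ℤ) :
    Submodule (Polynomial k) (Fin (C.rank q) → Polynomial k) :=
  (LinearMap.range (Matrix.mulVecLin (C.d (q - 1)))).map (C.castHomP (by ring))

/-- The cohomology `H^q(C)` as a `P = k[t]`-module. -/
noncomputable def cohomologyP (C : FreePolyComplex k) (q : ℤ) :=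
  (C.cocyclesP q) ⧸ ((C.coboundariesP q).comap (C.cocyclesP q).subtype)

noncomputable instance (C : FreePolyComplex k) (q : ℤ) :
    AddCommGroup (C.cohomologyP q) :=
  inferInstanceAs (AddCommGroup
    ((C.cocyclesP q) ⧸ ((C.coboundariesP q).comap (C.cocyclesP q).subtype)))

noncomputable instance (C : FreePolyComplex k) (q : ℤ) :
    Module (Polynomial k) (C.cohomologyP q) :=
  inferInstanceAs (Module (Polynomial k)
    ((C.cocyclesP q) ⧸ ((C.coboundariesP q).comap (C.cocyclesP q).subtype)))

end FreePolyComplex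

section Statement5Aux

open Module Matrix Polynomial

section FieldLemmas

variable {F : Type*} [Field F] {m n s : ℕ}

lemma stmt5_submatrix_left (N : Matrix (Fin m) (Fin n) F) (r : Fin s → Fin m) :
    (1 : Matrix (Fin m) (Fin m) F).submatrix r _root_.id * N = N.submatrix r _root_.id := by
  ext i j
  simp [Matrix.mul_apply, Matrix.one_apply]

lemma stmt5_submatrix_right (N : Matrix (Fin m) (Fin n) F) (c : Fin s → Fin n) :
    N * (1 : Matrix (Fin n) (Fin n) F).submatrix _root_.id c = N.submatrix _root_.id c := by
  ext i j
  simp [Matrix.mul_apply, Matrix.one_apply]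

lemma rank_le_of_minor (N : Matrix (Fin m) (Fin n) F) {s : ℕ}
    (r : Fin s → Fin m) (c : Fin s → Fin n) (h : (N.submatrix r c).det ≠ 0) :
    s ≤ N.rank := by
  have hu : IsUnit (N.submatrix r c) :=
    (Matrix.isUnit_iff_isUnit_det _).mpr (isUnit_iff_ne_zero.mpr h)
  have h1 : N.submatrix r c =
      (1 : Matrix (Fin m) (Fin m) F).submatrix r _root_.id * N *
        (1 : Matrix (Fin n) (Fin n) F).submatrix _root_.id c := by
    rw [stmt5_submatrix_left, stmt5_submatrix_right, Matrix.submatrix_submatrix]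
    rfl
  have h2 : (N.submatrix r c).rank = s := by
    rw [Matrix.rank_of_isUnit _ hu, Fintype.card_fin]
  calc s = (N.submatrix r c).rank := h2.symm
    _ ≤ ((1 : Matrix (Fin m) (Fin m) F).submatrix r _root_.id * N).rank := by
        rw [h1]; exact Matrix.rank_mul_le_left _ _
    _ ≤ N.rank := Matrix.rank_mul_le_right _ _

lemma exists_independent_cols (N : Matrix (Fin m) (Fin n) F) :
    ∃ c : Fin N.rank → Fin n, LinearIndependent F fun j => Nᵀ (c j) := by
  classical
  obtain ⟨b, hbsub, hspan, hind⟩ := exists_linearIndependent F (Set.range Nᵀ)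
  have hfin : b.Finite := hind.set_finite_of_isNoetherian
  haveI := hfin.fintype
  have hcard' : Fintype.card b = N.rank := by
    rw [Matrix.rank_eq_finrank_span_cols, show Set.range N.col = Set.range Nᵀ from rfl, ← hspan, finrank_span_set_eq_card hind,
      Set.toFinset_card]
  have e : Fin N.rank ≃ b := ((Fintype.equivFin b).trans (finCongr hcard')).symm
  have hchoice : ∀ x : b, ∃ i, Nᵀ i = (x : Fin m → F) := fun x => hbsub x.2
  choose idx hidx using hchoice
  refine ⟨fun j => idx (e j), ?_⟩
  have heq : (fun j => Nᵀ (idx (e j))) = fun j => ((e j : b) : Fin m → F) :=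
    funext fun j => hidx (e j)
  rw [heq]
  exact hind.comp e e.injective

lemma exists_minor (N : Matrix (Fin m) (Fin n) F) :
    ∃ (r : Fin N.rank → Fin m) (c : Fin N.rank → Fin n), (N.submatrix r c).det ≠ 0 := by
  classical
  obtain ⟨c, hc⟩ := exists_independent_cols N
  have hM1 : LinearIndependent F ((N.submatrix _root_.id c)ᵀ) := hc
  have hrank1 : ((N.submatrix _root_.id c)ᵀ).rank = N.rank := by
    rw [LinearIndependent.rank_matrix (M := (N.submatrix _root_.id c)ᵀ) hM1, Fintype.card_fin]
  obtain ⟨r', hr'⟩ := exists_independent_cols ((N.submatrix _root_.id c)ᵀ)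
  set r : Fin N.rank → Fin m := fun i => r' (finCongr hrank1.symm i) with hrdef
  have hrows : LinearIndependent F fun i : Fin N.rank =>
      ((N.submatrix _root_.id c)ᵀ)ᵀ (r' (finCongr hrank1.symm i)) :=
    hr'.comp (finCongr hrank1.symm) (finCongr hrank1.symm).injective
  have hQ : LinearIndependent F fun i : Fin N.rank => (N.submatrix r c) i := hrows
  have hu : IsUnit (N.submatrix r c) := Matrix.linearIndependent_rows_iff_isUnit.mp hQ
  exact ⟨r, c, ((Matrix.isUnit_iff_isUnit_det _).mp hu).ne_zero⟩

end FieldLemmas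

section Eval

variable {k : Type} [Field k] {m n s : ℕ}

local notation "P" => Polynomial k
local notation "K" => FractionRing (Polynomial k)

lemma stmt5_det_map {R S : Type*} [CommRing R] [CommRing S] (f : R →+* S)
    (A : Matrix (Fin s) (Fin s) R) : (A.map ⇑f).det = f A.det := by
  rw [RingHom.map_det, RingHom.mapMatrix_apply]

lemma stmt5_det_eval (A : Matrix (Fin s) (Fin s) (Polynomial k)) (a : k) :
    (A.map (eval a)).det = eval a A.det := by
  have h : (eval a : Polynomial k → k) = ⇑(evalRingHom a) := rfl
  rw [h, stmt5_det_map, coe_evalRingHom]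

lemma rank_eval_le_rank_frac (M : Matrix (Fin m) (Fin n) P) (a : k) :
    (M.map (eval a)).rank ≤ (M.map (algebraMap P K)).rank := by
  obtain ⟨r, c, h⟩ := exists_minor (M.map (eval a))
  apply rank_le_of_minor _ r c
  rw [Matrix.submatrix_map] at h ⊢
  have hne : (M.submatrix r c).det ≠ 0 := by
    intro h0
    apply h
    rw [stmt5_det_eval, h0, eval_zero]
  rw [stmt5_det_map]
  exact fun h0 => hne ((map_eq_zero_iff _ (IsFractionRing.injective P K)).mp h0)

lemma exists_generic (M : Matrix (Fin m) (Fin n) P) :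
    ∃ g : P, g ≠ 0 ∧ ∀ a : k, eval a g ≠ 0 →
      (M.map (algebraMap P K)).rank ≤ (M.map (eval a)).rank := by
  obtain ⟨r, c, h⟩ := exists_minor (M.map (algebraMap P K))
  rw [Matrix.submatrix_map, stmt5_det_map] at h
  refine ⟨(M.submatrix r c).det, fun h0 => h (by rw [h0, map_zero]), fun a ha => ?_⟩
  apply rank_le_of_minor _ r c
  rw [Matrix.submatrix_map, stmt5_det_eval]
  exact ha

end Eval

section OverP

variable {k : Type} [Field k] {m n s : ℕ}

local notation "P" => Polynomial k
local notation "K" => FractionRing (Polynomial k)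

noncomputable def toFrac (n : ℕ) : (Fin n → P) →ₗ[P] (Fin n → K) :=
  (Algebra.linearMap P K).compLeft (Fin n)

lemma toFrac_apply (x : Fin n → P) (j : Fin n) :
    toFrac (k := k) n x j = algebraMap P K (x j) := rfl

lemma toFrac_injective (n : ℕ) : Function.Injective (toFrac (k := k) n) := by
  intro x y h
  funext j
  exact IsFractionRing.injective P K (congr_fun h j)

lemma stmt5_mulVec_map {R S : Type*} [CommRing R] [CommRing S] (f : R →+* S)
    (M : Matrix (Fin m) (Fin n) R) (v : Fin n → R) :
    (M.map ⇑f).mulVec (fun j => f (v j)) = fun i => f (M.mulVec v i) := by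
  funext i
  simp [Matrix.mulVec, dotProduct, map_sum, _root_.map_mul]

lemma finrank_eq_finrank_span_toFrac (S : Submodule P (Fin n → P))
    [Module.Finite P ↥S] :
    finrank P ↥S = finrank K ↥(Submodule.span K (toFrac (k := k) n '' ↑S)) := by
  classical
  let b := Module.Free.chooseBasis P ↥S
  set w : Module.Free.ChooseBasisIndex P ↥S → (Fin n → K) :=
    fun i => toFrac (k := k) n ((b i : Fin n → P)) with hwdef
  have hw : LinearIndependent P w := by
    have h1 : LinearIndependent P (fun i => ((b i : Fin n → P))) :=
      b.linearIndependent.map' S.subtype (Submodule.ker_subtype S)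
    exact h1.map' (toFrac (k := k) n) (LinearMap.ker_eq_bot.mpr (toFrac_injective n))
  have hwK : LinearIndependent K w := (LinearIndependent.iff_fractionRing P K).mp hw
  have hspan : Submodule.span K (Set.range w) = Submodule.span K (toFrac (k := k) n '' ↑S) := by
    apply le_antisymm
    · refine Submodule.span_mono ?_
      rintro _ ⟨i, rfl⟩
      exact ⟨b i, (b i).2, rfl⟩
    · rw [Submodule.span_le]
      rintro _ ⟨x, hx, rfl⟩
      have hx2 : (⟨x, hx⟩ : ↥S) ∈ (⊤ : Submodule P ↥S) := trivial
      rw [← b.span_eq] at hx2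
      have hmem : toFrac (k := k) n x ∈
          Submodule.map ((toFrac (k := k) n).comp S.subtype)
            (Submodule.span P (Set.range b)) :=
        Submodule.mem_map_of_mem hx2
      rw [Submodule.map_span] at hmem
      have himg : (⇑((toFrac (k := k) n).comp S.subtype)) '' Set.range ⇑b = Set.range w := by
        rw [← Set.range_comp]
        rfl
      rw [himg] at hmem
      have hle : Submodule.span P (Set.range w) ≤
          (Submodule.span K (Set.range w)).restrictScalars P :=
        Submodule.span_le.mpr Submodule.subset_span
      exact hle hmem
  rw [Module.finrank_eq_card_chooseBasisIndex, ← hspan, finrank_span_eq_card hwK]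

lemma span_cocycles_eq (M : Matrix (Fin m) (Fin n) P) :
    Submodule.span K (toFrac (k := k) n '' ↑(LinearMap.ker (Matrix.mulVecLin M)))
      = LinearMap.ker (Matrix.mulVecLin (M.map (algebraMap P K))) := by
  apply le_antisymm
  · rw [Submodule.span_le]
    rintro _ ⟨x, hx, rfl⟩
    simp only [SetLike.mem_coe, LinearMap.mem_ker] at hx ⊢
    show (M.map (algebraMap P K)).mulVec (toFrac (k := k) n x) = 0
    have hmv := stmt5_mulVec_map (algebraMap P K) M x
    have hx0 : M.mulVec x = 0 := hx
    rw [show (toFrac (k := k) n x) = (fun j => algebraMap P K (x j)) from rfl, hmv]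
    funext i
    rw [hx0]
    simp
  · intro x hx
    obtain ⟨c, hc⟩ := IsLocalization.exist_integer_multiples_of_finite (S := K) (nonZeroDivisors P) x
    choose z hz using hc
    have hzx : toFrac (k := k) n z = algebraMap P K (c : P) • x := by
      funext j
      rw [toFrac_apply, hz j, Algebra.smul_def]
      rfl
    have hc0 : algebraMap P K (c : P) ≠ 0 := by
      have := nonZeroDivisors.coe_ne_zero c
      exact fun h => this ((map_eq_zero_iff _ (IsFractionRing.injective P K)).mp h)
    have hzmem : z ∈ LinearMap.ker (Matrix.mulVecLin M) := by
      simp only [LinearMap.mem_ker, Matrix.mulVecLin_apply]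
      have h1 : (fun i => algebraMap P K (M.mulVec z i)) = (0 : Fin m → K) := by
        rw [← stmt5_mulVec_map (algebraMap P K) M z]
        rw [show (fun j => algebraMap P K (z j)) = toFrac (k := k) n z from rfl, hzx]
        rw [Matrix.mulVec_smul]
        simp only [LinearMap.mem_ker, Matrix.mulVecLin_apply] at hx
        rw [hx, smul_zero]
      funext i
      exact IsFractionRing.injective P K (by rw [congr_fun h1 i]; simp)
    have hxeq : x = (algebraMap P K (c : P))⁻¹ • toFrac (k := k) n z := by
      rw [hzx, smul_smul, inv_mul_cancel₀ hc0, one_smul]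
    rw [hxeq]
    exact Submodule.smul_mem _ _ (Submodule.subset_span ⟨z, hzmem, rfl⟩)

lemma span_range_eq (M : Matrix (Fin m) (Fin n) P) :
    Submodule.span K (toFrac (k := k) m '' ↑(LinearMap.range (Matrix.mulVecLin M)))
      = LinearMap.range (Matrix.mulVecLin (M.map (algebraMap P K))) := by
  apply le_antisymm
  · rw [Submodule.span_le]
    rintro _ ⟨x, hx, rfl⟩
    simp only [SetLike.mem_coe, LinearMap.mem_range] at hx ⊢
    obtain ⟨y, rfl⟩ := hx
    refine ⟨toFrac (k := k) n y, ?_⟩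
    show (M.map (algebraMap P K)).mulVec (toFrac (k := k) n y) = toFrac (k := k) m (M.mulVecLin y)
    rw [show (toFrac (k := k) n y) = (fun j => algebraMap P K (y j)) from rfl,
      stmt5_mulVec_map]
    rfl
  · rintro x ⟨v, rfl⟩
    obtain ⟨c, hc⟩ := IsLocalization.exist_integer_multiples_of_finite (S := K) (nonZeroDivisors P) v
    choose z hz using hc
    have hzv : toFrac (k := k) n z = algebraMap P K (c : P) • v := by
      funext j
      rw [toFrac_apply, hz j, Algebra.smul_def]
      rfl
    have hc0 : algebraMap P K (c : P) ≠ 0 := by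
      have := nonZeroDivisors.coe_ne_zero c
      exact fun h => this ((map_eq_zero_iff _ (IsFractionRing.injective P K)).mp h)
    have key : Matrix.mulVecLin (M.map (algebraMap P K)) v
        = (algebraMap P K (c : P))⁻¹ • toFrac (k := k) m (M.mulVec z) := by
      have h1 : toFrac (k := k) m (M.mulVec z)
          = (M.map (algebraMap P K)).mulVec (toFrac (k := k) n z) := by
        rw [show (toFrac (k := k) n z) = (fun j => algebraMap P K (z j)) from rfl,
          stmt5_mulVec_map]
        rfl
      rw [h1, hzv, Matrix.mulVec_smul, smul_smul, inv_mul_cancel₀ hc0, one_smul]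
      rfl
    rw [Matrix.mulVecLin_apply] at key ⊢
    rw [key]
    exact Submodule.smul_mem _ _
      (Submodule.subset_span ⟨M.mulVec z, LinearMap.mem_range.mpr ⟨z, rfl⟩, rfl⟩)

end OverP

section Flat

variable {k : Type} [Field k]

local notation "P" => Polynomial k
local notation "K" => FractionRing (Polynomial k)

open TensorProduct in
lemma finrank_baseChange_quotient {M : Type} [AddCommGroup M] [Module P M]
    [Module.Finite P M] [Module.Free P M] (N : Submodule P M)
    [Module.Finite P ↥N] [Module.Free P ↥N] :
    finrank K (K ⊗[P] (M ⧸ N)) + finrank P ↥N = finrank P M := by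
  haveI : Module.Flat P K := IsLocalization.flat K (nonZeroDivisors P)
  have hm : ⇑(N.mkQ.baseChange K) = ⇑(LinearMap.lTensor K N.mkQ) :=
    LinearMap.baseChange_eq_ltensor _
  have hs : ⇑(N.subtype.baseChange K) = ⇑(LinearMap.lTensor K N.subtype) :=
    LinearMap.baseChange_eq_ltensor _
  have hsurj : Function.Surjective (N.mkQ.baseChange K) := by
    rw [hm]
    exact LinearMap.lTensor_surjective K (Submodule.mkQ_surjective N)
  have hinj : Function.Injective (N.subtype.baseChange K) := by
    rw [hs]
    exact Module.Flat.lTensor_preserves_injective_linearMap _ N.injective_subtype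
  have hker : LinearMap.ker (N.mkQ.baseChange K) = LinearMap.range (N.subtype.baseChange K) := by
    ext x
    have hx := SetLike.ext_iff.mp (lTensor_mkQ K N) x
    simp only [LinearMap.mem_ker, LinearMap.mem_range, hm, hs] at hx ⊢
    exact hx
  have e1 := LinearMap.finrank_range_add_finrank_ker (N.mkQ.baseChange K)
  have e2 : LinearMap.range (N.mkQ.baseChange K) = ⊤ := LinearMap.range_eq_top.mpr hsurj
  rw [e2, hker] at e1
  rw [finrank_top] at e1
  have e3 : finrank K ↥(LinearMap.range (N.subtype.baseChange K)) = finrank K (K ⊗[P] ↥N) :=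
    ((LinearEquiv.ofInjective _ hinj).finrank_eq).symm
  rw [e3] at e1
  have e4 : finrank K (K ⊗[P] M) = finrank P M := Module.finrank_baseChange
  have e5 : finrank K (K ⊗[P] ↥N) = finrank P ↥N := Module.finrank_baseChange
  omega

end Flat

end Statement5Aux


section ComplexAux

open Module Matrix Polynomial TensorProduct

variable {k : Type} [Field k]

local notation "P" => Polynomial k
local notation "K" => FractionRing (Polynomial k)

lemma castHom_rfl (C : FreePolyComplex k) {q : ℤ} :
    C.castHom (rfl : q = q) = LinearMap.id := rfl

lemma castHom_finrank (C : FreePolyComplex k) {p q : ℤ} (h : p = q)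
    (S : Submodule k (Fin (C.rank p) → k)) :
    finrank k ↥(S.map (C.castHom h)) = finrank k ↥S := by
  subst h
  rw [castHom_rfl, Submodule.map_id]

lemma dEval_castHom (C : FreePolyComplex k) (a : k) {p q : ℤ} (h : p = q) :
    (C.dEval a q).comp (C.castHom h) = (C.castHom (by rw [h])).comp (C.dEval a p) := by
  subst h; rfl

lemma dEval_dEval (C : FreePolyComplex k) (a : k) (p : ℤ) :
    (C.dEval a (p+1)).comp (C.dEval a p) = 0 := by
  unfold FreePolyComplex.dEval
  rw [← Matrix.mulVecLin_mul]
  have h0 : (C.d (p+1) * C.d p).map ⇑(evalRingHom a) = 0 := by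
    rw [C.dsq p]; exact Matrix.map_zero _ (map_zero _)
  rw [Matrix.map_mul] at h0
  have h1 : (C.d (p+1)).map (eval a) * (C.d p).map (eval a) = 0 := by
    simpa [coe_evalRingHom] using h0
  rw [h1, Matrix.mulVecLin_zero]

lemma coboundariesEval_le (C : FreePolyComplex k) (a : k) (q : ℤ) :
    C.coboundariesEval a q ≤ C.cocyclesEval a q := by
  rintro x hx
  obtain ⟨z, hz, rfl⟩ := hx
  obtain ⟨y, rfl⟩ := hz
  simp only [FreePolyComplex.cocyclesEval, LinearMap.mem_ker]
  have h1 := LinearMap.congr_fun (dEval_castHom C a (show q - 1 + 1 = q by ring))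
    (C.dEval a (q-1) y)
  simp only [LinearMap.coe_comp, Function.comp_apply] at h1
  rw [h1]
  have h2 := LinearMap.congr_fun (dEval_dEval C a (q-1)) y
  simp only [LinearMap.coe_comp, Function.comp_apply, LinearMap.zero_apply] at h2
  rw [h2, map_zero]

lemma finrank_cohomologyEval (C : FreePolyComplex k) (a : k) (q : ℤ) :
    finrank k (C.cohomologyEval a q)
      + ((C.d (q-1)).map (eval a)).rank + ((C.d q).map (eval a)).rank = C.rank q := by
  have hle := coboundariesEval_le C a q
  have e1 : finrank k (C.cohomologyEval a q)
      + finrank k ↥((C.coboundariesEval a q).comap (C.cocyclesEval a q).subtype)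
      = finrank k ↥(C.cocyclesEval a q) :=
    Submodule.finrank_quotient_add_finrank _
  have e2 : finrank k ↥((C.coboundariesEval a q).comap (C.cocyclesEval a q).subtype)
      = finrank k ↥(C.coboundariesEval a q) :=
    (Submodule.comapSubtypeEquivOfLe hle).finrank_eq
  have e3 : finrank k ↥(C.coboundariesEval a q) = ((C.d (q-1)).map (eval a)).rank := by
    rw [show C.coboundariesEval a q
        = (LinearMap.range (C.dEval a (q-1))).map (C.castHom (by ring)) from rfl,
      castHom_finrank]
    rfl
  have e4 : ((C.d q).map (eval a)).rank + finrank k ↥(C.cocyclesEval a q) = C.rank q := by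
    have h := LinearMap.finrank_range_add_finrank_ker (C.dEval a q)
    rw [Module.finrank_fin_fun] at h
    exact h
  omega

lemma castHomP_rfl (C : FreePolyComplex k) {q : ℤ} :
    C.castHomP (rfl : q = q) = LinearMap.id := rfl

lemma castHomP_finrank (C : FreePolyComplex k) {p q : ℤ} (h : p = q)
    (S : Submodule P (Fin (C.rank p) → P)) :
    finrank P ↥(S.map (C.castHomP h)) = finrank P ↥S := by
  subst h
  rw [castHomP_rfl, Submodule.map_id]

lemma mulVecLinP_castHomP (C : FreePolyComplex k) {p q : ℤ} (h : p = q) :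
    (Matrix.mulVecLin (C.d q)).comp (C.castHomP h)
      = (C.castHomP (by rw [h])).comp (Matrix.mulVecLin (C.d p)) := by
  subst h; rfl

lemma mulVecLinP_dsq (C : FreePolyComplex k) (p : ℤ) :
    (Matrix.mulVecLin (C.d (p+1))).comp (Matrix.mulVecLin (C.d p)) = 0 := by
  rw [← Matrix.mulVecLin_mul, C.dsq p, Matrix.mulVecLin_zero]

lemma coboundariesP_le (C : FreePolyComplex k) (q : ℤ) :
    C.coboundariesP q ≤ C.cocyclesP q := by
  rintro x hx
  obtain ⟨z, hz, rfl⟩ := hx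
  obtain ⟨y, rfl⟩ := hz
  simp only [FreePolyComplex.cocyclesP, LinearMap.mem_ker]
  have h1 := LinearMap.congr_fun (mulVecLinP_castHomP C (show q - 1 + 1 = q by ring))
    ((C.d (q-1)).mulVecLin y)
  simp only [LinearMap.coe_comp, Function.comp_apply] at h1
  rw [h1]
  have h2 := LinearMap.congr_fun (mulVecLinP_dsq C (q-1)) y
  simp only [LinearMap.coe_comp, Function.comp_apply, LinearMap.zero_apply] at h2
  rw [h2, map_zero]

lemma finrank_cohomologyP' (C : FreePolyComplex k) (q : ℤ) :
    finrank K (K ⊗[P] C.cohomologyP q)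
      + ((C.d (q-1)).map (algebraMap P K)).rank
      + ((C.d q).map (algebraMap P K)).rank = C.rank q := by
  classical
  haveI hZfin : Module.Finite P ↥(C.cocyclesP q) :=
    Module.Finite.iff_fg.mpr (IsNoetherian.noetherian _)
  set N := (C.coboundariesP q).comap (C.cocyclesP q).subtype with hN
  haveI hNfin : Module.Finite P ↥N :=
    Module.Finite.iff_fg.mpr (IsNoetherian.noetherian _)
  haveI : Module.Free P ↥(C.cocyclesP q) :=
    Module.free_of_finite_type_torsion_free' (R := P) (M := ↥(C.cocyclesP q))
  haveI : Module.Free P ↥N :=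
    Module.free_of_finite_type_torsion_free' (R := P) (M := ↥N)
  have hbase := finrank_baseChange_quotient (M := ↥(C.cocyclesP q)) N
  have hdef : finrank K (K ⊗[P] C.cohomologyP q)
      = finrank K (K ⊗[P] (↥(C.cocyclesP q) ⧸ N)) := rfl
  have hle := coboundariesP_le C q
  have e2 : finrank P ↥N = finrank P ↥(C.coboundariesP q) :=
    (Submodule.comapSubtypeEquivOfLe hle).finrank_eq
  haveI : Module.Finite P ↥(LinearMap.range (Matrix.mulVecLin (C.d (q-1)))) :=
    Module.Finite.iff_fg.mpr (IsNoetherian.noetherian _)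
  have e3 : finrank P ↥(C.coboundariesP q)
      = finrank P ↥(LinearMap.range (Matrix.mulVecLin (C.d (q-1)))) := by
    rw [show C.coboundariesP q
        = (LinearMap.range (Matrix.mulVecLin (C.d (q-1)))).map (C.castHomP (by ring)) from rfl,
      castHomP_finrank]
  have e4 : finrank P ↥(LinearMap.range (Matrix.mulVecLin (C.d (q-1))))
      = ((C.d (q-1)).map (algebraMap P K)).rank := by
    rw [finrank_eq_finrank_span_toFrac, span_range_eq]
    rfl
  have e5 : finrank P ↥(C.cocyclesP q)
      = finrank K ↥(LinearMap.ker (Matrix.mulVecLin ((C.d q).map (algebraMap P K)))) := by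
    rw [show C.cocyclesP q = LinearMap.ker (Matrix.mulVecLin (C.d q)) from rfl,
      finrank_eq_finrank_span_toFrac, span_cocycles_eq]
  have e6 : ((C.d q).map (algebraMap P K)).rank
      + finrank K ↥(LinearMap.ker (Matrix.mulVecLin ((C.d q).map (algebraMap P K))))
      = C.rank q := by
    have h := LinearMap.finrank_range_add_finrank_ker
      (Matrix.mulVecLin ((C.d q).map (algebraMap P K)))
    rw [Module.finrank_fin_fun] at h
    exact h
  rw [hdef]
  omega

end ComplexAux

/-- Let `k` be a field, `P = k[t]`, and for `a ∈ k` let `k_a` denote `k`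
viewed as a `P`-module via evaluation at `a`.  Let `C` be a bounded cochain complex of free
finitely generated `P`-modules and let `r` be the rank of the finitely generated `P`-module
`H^i(C)` (the dimension over the fraction field `k(t)` after tensoring with `k(t)`).  Then
(1) `dim_k H^i(C ⊗_P k_a) ≥ r` for every `a ∈ k`, and (2) the set of `a ∈ k` with
`dim_k H^i(C ⊗_P k_a) > r` is finite. -/
theorem cohomology_dim_ge_rank_and_generic_eq
    {k : Type} [Field k] (C : FreePolyComplex k) (i : ℤ) (r : ℕ)
    (hr : r = Module.finrank (FractionRing (Polynomial k))
        (TensorProduct (Polynomial k) (FractionRing (Polynomial k)) (C.cohomologyP i))) :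
    (∀ a : k, r ≤ Module.finrank k (C.cohomologyEval a i)) ∧
      {a : k | r < Module.finrank k (C.cohomologyEval a i)}.Finite := by
  classical
  obtain ⟨gA, hgA0, hgA⟩ := exists_generic (C.d i)
  obtain ⟨gB, hgB0, hgB⟩ := exists_generic (C.d (i-1))
  have hP := finrank_cohomologyP' C i
  have hr' : r + ((C.d (i-1)).map (algebraMap (Polynomial k) (FractionRing (Polynomial k)))).rank
      + ((C.d i).map (algebraMap (Polynomial k) (FractionRing (Polynomial k)))).rank
      = C.rank i := by
    rw [hr]; exact hP
  constructor
  · intro a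
    have h1 := rank_eval_le_rank_frac (C.d i) a
    have h2 := rank_eval_le_rank_frac (C.d (i-1)) a
    have h3 := finrank_cohomologyEval C a i
    omega
  · apply Set.Finite.subset
      ((Polynomial.finite_setOf_isRoot hgA0).union (Polynomial.finite_setOf_isRoot hgB0))
    intro a ha
    simp only [Set.mem_setOf_eq] at ha
    by_contra hmem
    simp only [Set.mem_union, Set.mem_setOf_eq, Polynomial.IsRoot] at hmem
    push_neg at hmem
    have h1 := hgA a hmem.1
    have h2 := hgB a hmem.2
    have h1' := rank_eval_le_rank_frac (C.d i) a
    have h2' := rank_eval_le_rank_frac (C.d (i-1)) a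
    have h3 := finrank_cohomologyEval C a i
    omega
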